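/- In a cycle graph C_n with n ≥ 4 vertices, the maximum size of a set of vertices in geodesic mutual visibility is exactly 3. -/

import Mathlib

open SimpleGraph

/-- A set `S` of vertices of a graph `G` is in geodesic mutual visibility:
every pair of distinct vertices of `S` admits a shortest path (geodesic)
between them whose internal vertices are all outside `S`. -/
def gmv {V : Type*} (G : SimpleGraph V) (S : Finset V) : Prop :=
  ∀ u ∈ S, ∀ v ∈ S, u ≠ v →
    ∃ p : G.Walk u v, p.length = G.dist u v ∧
      ∀ w ∈ p.support, w ∈ S → w = u ∨ w = v

namespace GmvCycleAux

variable {n : ℕ}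

lemma sub_val_one {u v : Fin n} (hn : 2 ≤ n) (h : (u - v).val = 1) :
    u.val = v.val + 1 ∨ (v.val + 1 = n ∧ u.val = 0) := by
  have hu := u.isLt; have hv := v.isLt
  rw [Fin.sub_def] at h
  simp only at h
  rcases Nat.lt_or_ge (n - v.val + u.val) n with hlt | hge
  · rw [Nat.mod_eq_of_lt hlt] at h; omega
  · rw [Nat.mod_eq_sub_mod hge, Nat.mod_eq_of_lt (by omega)] at h; omega

lemma adj_cases (hn : 2 ≤ n) {u v : Fin n} (h : (cycleGraph n).Adj u v) :
    u.val + 1 = v.val ∨ v.val + 1 = u.val ∨ (u.val = 0 ∧ v.val + 1 = n) ∨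
      (v.val = 0 ∧ u.val + 1 = n) := by
  rw [cycleGraph_adj'] at h
  rcases h with h | h
  · rcases sub_val_one hn h with h | h
    · omega
    · omega
  · rcases sub_val_one hn h with h | h
    · omega
    · omega

lemma adj_succ (hn : 2 ≤ n) {a : ℕ} (h : a + 1 < n) :
    (cycleGraph n).Adj ⟨a, by omega⟩ ⟨a + 1, h⟩ := by
  rw [cycleGraph_adj']
  right
  rw [Fin.sub_def]
  simp only
  have h1 : n - a + (a + 1) = 1 + n := by omega
  rw [h1, Nat.add_mod_right, Nat.mod_eq_of_lt (by omega)]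

lemma adj_wrap (hn : 2 ≤ n) :
    (cycleGraph n).Adj ⟨n - 1, by omega⟩ ⟨0, by omega⟩ := by
  rw [cycleGraph_adj']
  right
  rw [Fin.sub_def]
  simp only
  have h1 : n - (n - 1) + 0 = 1 := by omega
  rw [h1, Nat.mod_eq_of_lt (by omega)]

/-- Potential lemma: along a walk, an edge-Lipschitz function changes by at most the length. -/
lemma walk_le {φ : Fin n → ℕ}
    (hφ : ∀ ⦃x y : Fin n⦄, (cycleGraph n).Adj x y → φ y ≤ φ x + 1) :
    ∀ {u v : Fin n} (p : (cycleGraph n).Walk u v), φ v ≤ φ u + p.length := by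
  intro u v p
  induction p with
  | nil => simp
  | @cons u x v h q ih =>
      have := hφ h
      simp only [Walk.length_cons]
      omega

/-- forward (clockwise) distance from `a` to `b` on the cycle of length `n`. -/
def fwd (n a b : ℕ) : ℕ := if a ≤ b then b - a else b + n - a

/-- cyclic distance. -/
def cyc (n a b : ℕ) : ℕ := min (fwd n a b) (n - fwd n a b)

lemma cyc_lipschitz (hn : 2 ≤ n) (u : Fin n) :
    ∀ ⦃x y : Fin n⦄, (cycleGraph n).Adj x y →
      cyc n u.val y.val ≤ cyc n u.val x.val + 1 := by
  intro x y h
  have h4 := adj_cases hn h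
  have hu := u.isLt; have hx := x.isLt; have hy := y.isLt
  unfold cyc fwd
  split_ifs <;> omega

lemma cyc_self (hn : 2 ≤ n) (u : Fin n) : cyc n u.val u.val = 0 := by
  unfold cyc fwd
  simp

lemma cycle_connected (hn : 2 ≤ n) : (cycleGraph n).Connected :=
  have : Nonempty (Fin n) := ⟨⟨0, by omega⟩⟩
  ⟨cycleGraph_preconnected⟩

lemma dist_lower (hn : 2 ≤ n) (u v : Fin n) :
    cyc n u.val v.val ≤ (cycleGraph n).dist u v := by
  obtain ⟨p, hp⟩ := (cycle_connected hn).exists_walk_length_eq_dist u v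
  have h1 := walk_le (cyc_lipschitz hn u) p
  have h2 := cyc_self hn u
  omega

/-- an increasing walk from `a` to `b` along the cycle. -/
lemma exists_up_walk (hn : 2 ≤ n) :
    ∀ (k a b : ℕ) (ha : a < n) (hb : b < n), a + k = b →
      ∃ p : (cycleGraph n).Walk ⟨a, ha⟩ ⟨b, hb⟩,
        p.length = k ∧ ∀ w ∈ p.support, a ≤ w.val ∧ w.val ≤ b := by
  intro k
  induction k with
  | zero =>
      intro a b ha hb hab
      obtain rfl : a = b := by omega
      exact ⟨Walk.nil, by simp, by simp⟩
  | succ k ih =>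
      intro a b ha hb hab
      have ha1 : a + 1 < n := by omega
      obtain ⟨q, hq1, hq2⟩ := ih (a + 1) b ha1 hb (by omega)
      refine ⟨Walk.cons (adj_succ hn ha1) q, by simp [hq1], ?_⟩
      intro w hw
      rw [Walk.support_cons, List.mem_cons] at hw
      rcases hw with rfl | hw
      · simp; omega
      · have := hq2 w hw; omega

/-- Invariant: a walk avoiding `b` and `d` cannot cross between the two arcs. -/
lemma between_invariant (hn : 2 ≤ n) {b d : Fin n} (hbd : b.val < d.val) :
    ∀ {u v : Fin n} (p : (cycleGraph n).Walk u v),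
      (∀ w ∈ p.support, w ≠ b ∧ w ≠ d) →
      ((b.val < u.val ∧ u.val < d.val) ↔ (b.val < v.val ∧ v.val < d.val)) := by
  intro u v p
  induction p with
  | nil => intro _; rfl
  | @cons u x v h q ih =>
      intro hs
      have hq := ih (fun w hw => hs w (by rw [Walk.support_cons]; exact List.mem_cons_of_mem _ hw))
      have hu' := hs u (by rw [Walk.support_cons]; exact List.mem_cons_self)
      have hx' := hs x (by rw [Walk.support_cons]; exact List.mem_cons_of_mem _ q.start_mem_support)
      have h4 := adj_cases hn h
      have hub : u.val ≠ b.val := fun e => hu'.1 (Fin.ext e)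
      have hud : u.val ≠ d.val := fun e => hu'.2 (Fin.ext e)
      have hxb : x.val ≠ b.val := fun e => hx'.1 (Fin.ext e)
      have hxd : x.val ≠ d.val := fun e => hx'.2 (Fin.ext e)
      have hu := u.isLt; have hx := x.isLt
      have hd := d.isLt
      have hstep : (b.val < u.val ∧ u.val < d.val) ↔ (b.val < x.val ∧ x.val < d.val) := by
        omega
      exact hstep.trans hq

end GmvCycleAux

open GmvCycleAux in
/-- In a cycle graph with at least 4 vertices, the maximum size of a set in
geodesic mutual visibility is exactly 3. -/
theorem stmt1 (n : ℕ) (hn : 4 ≤ n) :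
    IsGreatest {k : ℕ | ∃ S : Finset (Fin n),
      gmv (SimpleGraph.cycleGraph n) S ∧ S.card = k} 3 := by
  have hn2 : 2 ≤ n := by omega
  constructor
  · -- membership: a gmv set of size 3
    set m : ℕ := (n + 1) / 2 with hm
    have hm2 : 2 ≤ m := by omega
    have hmn : m < n := by omega
    set x0 : Fin n := ⟨0, by omega⟩ with hx0
    set x1 : Fin n := ⟨1, by omega⟩ with hx1
    set xm : Fin n := ⟨m, hmn⟩ with hxm
    have h01 : x0 ≠ x1 := by simp [hx0, hx1, Fin.ext_iff]
    have h0m : x0 ≠ xm := by simp [hx0, hxm, Fin.ext_iff]; omega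
    have h1m : x1 ≠ xm := by simp [hx1, hxm, Fin.ext_iff]; omega
    refine ⟨{x0, x1, xm}, ?_, ?_⟩
    swap
    · rw [Finset.card_insert_of_notMem (by simp [h01, h0m]),
        Finset.card_insert_of_notMem (by simp [h1m]), Finset.card_singleton]
    have memS : ∀ w : Fin n, w ∈ ({x0, x1, xm} : Finset (Fin n)) ↔
        w = x0 ∨ w = x1 ∨ w = xm := by
      intro w; simp
    -- the three walks
    have pair01 : ∃ p : (cycleGraph n).Walk x0 x1, p.length = (cycleGraph n).dist x0 x1 ∧
        ∀ w ∈ p.support, w ∈ ({x0, x1, xm} : Finset (Fin n)) → w = x0 ∨ w = x1 := by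
      obtain ⟨p, hp1, hp2⟩ := exists_up_walk hn2 1 0 1 (by omega) (by omega) rfl
      have hdist : (cycleGraph n).dist x0 x1 = 1 := by
        have hlo := dist_lower hn2 x0 x1
        have hhi : (cycleGraph n).dist x0 x1 ≤ p.length := SimpleGraph.dist_le p
        have : cyc n x0.val x1.val = 1 := by
          simp only [hx0, hx1, cyc, fwd]; norm_num; omega
        omega
      refine ⟨p, by rw [hp1, hdist], ?_⟩
      intro w hw _
      have := hp2 w hw
      rcases Nat.lt_or_ge w.val 1 with h | h
      · left; apply Fin.ext; simp [hx0]; omega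
      · right; apply Fin.ext; simp [hx1]; omega
    have pair1m : ∃ p : (cycleGraph n).Walk x1 xm, p.length = (cycleGraph n).dist x1 xm ∧
        ∀ w ∈ p.support, w ∈ ({x0, x1, xm} : Finset (Fin n)) → w = x1 ∨ w = xm := by
      obtain ⟨p, hp1, hp2⟩ := exists_up_walk hn2 (m - 1) 1 m (by omega) hmn (by omega)
      have hdist : (cycleGraph n).dist x1 xm = m - 1 := by
        have hlo := dist_lower hn2 x1 xm
        have hhi : (cycleGraph n).dist x1 xm ≤ p.length := SimpleGraph.dist_le p
        have : cyc n x1.val xm.val = m - 1 := by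
          simp only [hx1, hxm, cyc, fwd]
          rw [if_pos (by omega)]
          omega
        omega
      refine ⟨p, by rw [hp1, hdist], ?_⟩
      intro w hw hwS
      have hb := hp2 w hw
      rcases (memS w).mp hwS with rfl | rfl | rfl
      · exfalso; simp [hx0] at hb
      · left; rfl
      · right; rfl
    have pairm0 : ∃ p : (cycleGraph n).Walk xm x0, p.length = (cycleGraph n).dist xm x0 ∧
        ∀ w ∈ p.support, w ∈ ({x0, x1, xm} : Finset (Fin n)) → w = xm ∨ w = x0 := by
      obtain ⟨q, hq1, hq2⟩ := exists_up_walk hn2 (n - 1 - m) m (n - 1) hmn (by omega) (by omega)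
      set p := q.concat (adj_wrap hn2) with hp
      have hplen : p.length = n - m := by
        rw [hp, Walk.length_concat, hq1]; omega
      have hdist : (cycleGraph n).dist xm x0 = n - m := by
        have hlo := dist_lower hn2 xm x0
        have hhi : (cycleGraph n).dist xm x0 ≤ p.length := SimpleGraph.dist_le p
        have : cyc n xm.val x0.val = n - m := by
          simp only [hxm, hx0, cyc, fwd]
          rw [if_neg (by omega)]
          omega
        omega
      refine ⟨p, by rw [hplen, hdist], ?_⟩
      intro w hw hwS
      rw [hp, Walk.support_concat, List.mem_append] at hw
      rcases hw with hw | hw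
      · have hb := hq2 w hw
        rcases (memS w).mp hwS with rfl | rfl | rfl
        · exfalso; simp [hx0] at hb; omega
        · exfalso; simp [hx1] at hb; omega
        · left; rfl
      · right; simpa using hw
    -- assemble gmv
    intro u hu v hv huv
    have hsymm : ∀ {a b : Fin n},
        (∃ p : (cycleGraph n).Walk a b, p.length = (cycleGraph n).dist a b ∧
          ∀ w ∈ p.support, w ∈ ({x0, x1, xm} : Finset (Fin n)) → w = a ∨ w = b) →
        (∃ p : (cycleGraph n).Walk b a, p.length = (cycleGraph n).dist b a ∧
          ∀ w ∈ p.support, w ∈ ({x0, x1, xm} : Finset (Fin n)) → w = b ∨ w = a) := by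
      rintro a b ⟨p, hl, hs⟩
      refine ⟨p.reverse, by rw [Walk.length_reverse, hl, SimpleGraph.dist_comm], ?_⟩
      intro w hw hwS
      rw [Walk.support_reverse, List.mem_reverse] at hw
      exact (hs w hw hwS).symm
    rcases (memS u).mp hu with rfl | rfl | rfl <;>
      rcases (memS v).mp hv with rfl | rfl | rfl
    · exact absurd rfl huv
    · exact pair01
    · exact hsymm pairm0
    · exact hsymm pair01
    · exact absurd rfl huv
    · exact pair1m
    · exact pairm0
    · exact hsymm pair1m
    · exact absurd rfl huv
  · -- upper bound
    rintro k ⟨S, hS, rfl⟩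
    by_contra hk
    push_neg at hk
    have h4 : 4 ≤ S.card := hk
    -- extract four increasing elements
    set l := S.sort (· ≤ ·) with hl
    have hlen : 4 ≤ l.length := by rwa [hl, Finset.length_sort]
    have hsorted : l.Pairwise (· < ·) := (Finset.sortedLT_sort S).pairwise
    set a := l.get ⟨0, by omega⟩ with hadef
    set b := l.get ⟨1, by omega⟩ with hbdef
    set c := l.get ⟨2, by omega⟩ with hcdef
    set d := l.get ⟨3, by omega⟩ with hddef
    have hmem : ∀ i : Fin l.length, l.get i ∈ S := by
      intro i
      rw [← Finset.mem_sort (α := Fin n) (· ≤ ·)]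
      exact List.get_mem l i
    have horder := List.pairwise_iff_get.mp hsorted
    have hab : a < b := horder _ _ (by simp [Fin.lt_def])
    have hbc : b < c := horder _ _ (by simp [Fin.lt_def])
    have hcd : c < d := horder _ _ (by simp [Fin.lt_def])
    have haS : a ∈ S := hmem _
    have hbS : b ∈ S := hmem _
    have hcS : c ∈ S := hmem _
    have hdS : d ∈ S := hmem _
    have hac : a ≠ c := ne_of_lt (hab.trans hbc)
    obtain ⟨p, _, hsup⟩ := hS a haS c hcS hac
    have havoid : ∀ w ∈ p.support, w ≠ b ∧ w ≠ d := by
      intro w hw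
      refine ⟨fun hwb => ?_, fun hwd => ?_⟩
      · rcases hsup w hw (by rw [hwb]; exact hbS) with rfl | rfl
        · exact (ne_of_lt hab) hwb
        · exact (ne_of_gt hbc) hwb
      · rcases hsup w hw (by rw [hwd]; exact hdS) with rfl | rfl
        · exact (ne_of_lt (hab.trans (hbc.trans hcd))) hwd
        · exact (ne_of_lt hcd) hwd
    have hbd : b.val < d.val := Fin.lt_def.mp (hbc.trans hcd)
    have hinv := between_invariant hn2 hbd p havoid
    rw [Fin.lt_def] at hab hbc hcd
    omega
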